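/- Every positive rational number q can be written as φ(m²)/φ(n²) for some positive integers m and n, where φ is Euler's totient function. -/

import Mathlib

private def g (m : ℕ) : ℕ := Nat.totient (m ^ 2)

private lemma g_pos {m : ℕ} (hm : 0 < m) : 0 < g m :=
  Nat.totient_pos.mpr (pow_pos hm 2)

private lemma g_mul {m n : ℕ} (h : Nat.Coprime m n) : g (m * n) = g m * g n := by
  unfold g
  rw [mul_pow, Nat.totient_mul (Nat.Coprime.pow 2 2 h)]

private lemma g_prime_pow {p k : ℕ} (hp : p.Prime) (hk : 0 < k) :
    g (p ^ k) = p ^ (2 * k - 1) * (p - 1) := by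
  unfold g
  rw [← pow_mul, mul_comm k 2, Nat.totient_prime_pow hp (by omega)]

private def Good (a b : ℕ) : Prop :=
  ∃ m n : ℕ, 0 < m ∧ 0 < n ∧ (a : ℚ) / b = g m / g n ∧
    ∀ r : ℕ, r.Prime → r ∣ m * n → ∃ s : ℕ, s.Prime ∧ s ∣ a * b ∧ r ≤ s

private lemma good_symm {a b : ℕ} (ha : 0 < a) (hb : 0 < b) (h : Good a b) : Good b a := by
  obtain ⟨m, n, hm, hn, heq, hpr⟩ := h
  refine ⟨n, m, hn, hm, ?_, ?_⟩
  · have hb0 : (b : ℚ) ≠ 0 := by positivity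
    have ha0 : (a : ℚ) ≠ 0 := by positivity
    have hgm : (g m : ℚ) ≠ 0 := by have := g_pos hm; positivity
    have hgn : (g n : ℚ) ≠ 0 := by have := g_pos hn; positivity
    field_simp at heq ⊢
    linarith [heq]
  · intro r hr hrd
    obtain ⟨s, hs, hsd, hrs⟩ := hpr r hr (by rwa [mul_comm])
    exact ⟨s, hs, by rwa [mul_comm], hrs⟩

private lemma step (N : ℕ) (IH : ∀ a b : ℕ, 0 < a → 0 < b → a * b < N → Good a b)
    (a b : ℕ) (ha : 0 < a) (hb : 0 < b) (habN : a * b = N)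
    (p : ℕ) (hp : p.Prime)
    (hmax : ∀ r ∈ (a * b).primeFactors, r ≤ p)
    (hv : b.factorization p ≤ a.factorization p)
    (hv1 : 0 < a.factorization p + b.factorization p) : Good a b := by
  set va := a.factorization p with hva
  set vb := b.factorization p with hvb
  set a' := a / p ^ va with ha'
  set b' := b / p ^ vb with hb'
  have hA : p ^ va * a' = a := Nat.ordProj_mul_ordCompl_eq_self a p
  have hB : p ^ vb * b' = b := Nat.ordProj_mul_ordCompl_eq_self b p
  have hpa' : ¬ p ∣ a' := Nat.not_dvd_ordCompl hp ha.ne'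
  have hpb' : ¬ p ∣ b' := Nat.not_dvd_ordCompl hp hb.ne'
  have ha'p : 0 < a' := Nat.ordCompl_pos p ha.ne'
  have hb'p : 0 < b' := Nat.ordCompl_pos p hb.ne'
  have ha'd : a' ∣ a := Nat.ordCompl_dvd a p
  have hb'd : b' ∣ b := Nat.ordCompl_dvd b p
  have hp2 : 2 ≤ p := hp.two_le
  have hva1 : 1 ≤ va := by omega
  obtain ⟨pm, hpm⟩ : ∃ pm : ℕ, p = pm + 1 := ⟨p - 1, by omega⟩
  have hpm1 : 1 ≤ pm := by omega
  -- primes dividing a*b are ≤ p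
  have hle : ∀ s : ℕ, s.Prime → s ∣ a * b → s ≤ p := by
    intro s hs hsd
    exact hmax s (Nat.mem_primeFactors.mpr ⟨hs, hsd, by positivity⟩)
  -- all primes dividing a' * (b' * pm) are < p
  have hlt : ∀ s : ℕ, s.Prime → s ∣ a' * (b' * pm) → s < p := by
    intro s hs hsd
    rcases (Nat.Prime.dvd_mul hs).mp hsd with h1 | h2
    · have hsp : s ≤ p := hle s hs (Dvd.dvd.mul_right (h1.trans ha'd) b)
      rcases eq_or_lt_of_le hsp with rfl | h
      · exact absurd h1 hpa'
      · exact h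
    · rcases (Nat.Prime.dvd_mul hs).mp h2 with h3 | h4
      · have hsp : s ≤ p := hle s hs (Dvd.dvd.mul_left (h3.trans hb'd) a)
        rcases eq_or_lt_of_le hsp with rfl | h
        · exact absurd h3 hpb'
        · exact h
      · have := Nat.le_of_dvd (by omega) h4
        omega
  have hQa : (a : ℚ) = (p : ℚ) ^ va * (a' : ℚ) := by exact_mod_cast congrArg (Nat.cast (R := ℚ)) hA.symm
  have hQb : (b : ℚ) = (p : ℚ) ^ vb * (b' : ℚ) := by exact_mod_cast congrArg (Nat.cast (R := ℚ)) hB.symm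
  have hpQ : (0 : ℚ) < (p : ℚ) := by exact_mod_cast (by omega : 0 < p)
  have hpab : p ∣ a * b := Dvd.dvd.mul_right ((dvd_pow_self p (by omega : va ≠ 0)).trans ⟨a', hA.symm⟩) b
  have hABprod : p ^ va * p ^ vb * (a' * b') = a * b := by rw [← hA, ← hB]; ring
  have hppow2 : 2 ≤ p ^ va * p ^ vb := by
    calc 2 ≤ p := hp2
    _ ≤ p ^ va := Nat.le_self_pow (by omega) p
    _ ≤ p ^ va * p ^ vb := Nat.le_mul_of_pos_right _ (by positivity)
  have hsmall : a' * b' < N := by nlinarith [ha'p, hb'p, habN]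
  set d := va - vb with hd
  rcases Nat.eq_zero_or_pos d with hd0 | hdpos
  · -- va = vb : the p-parts cancel
    have hvav : va = vb := by omega
    obtain ⟨m, n, hm, hn, heq, hpr⟩ := IH a' b' ha'p hb'p hsmall
    refine ⟨m, n, hm, hn, ?_, ?_⟩
    · rw [hQa, hQb, hvav, ← heq, mul_div_mul_left]
      positivity
    · intro r hr hrd
      obtain ⟨s, hs, hsd, hrs⟩ := hpr r hr hrd
      exact ⟨s, hs, hsd.trans (mul_dvd_mul ha'd hb'd), hrs⟩
  · rcases Nat.even_or_odd d with hev | hodd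
    · -- d = 2*(j+1) even, use g(p^(j+2))/g(p) = p^d
      obtain ⟨j, hj⟩ : ∃ j : ℕ, d = 2 * (j + 1) := by
        obtain ⟨t, ht⟩ := hev; exact ⟨t - 1, by omega⟩
      obtain ⟨m', n', hm', hn', heq', hpr'⟩ := IH a' b' ha'p hb'p hsmall
      have hpmn : ∀ r : ℕ, r.Prime → r ∣ m' * n' → r < p := by
        intro r hr hrd
        obtain ⟨s, hs, hsd, hrs⟩ := hpr' r hr hrd
        have : s < p := hlt s hs (hsd.trans (mul_dvd_mul_left a' (dvd_mul_right b' pm)))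
        omega
      have hpnm' : ¬ p ∣ m' := fun h => absurd (hpmn p hp (h.mul_right n')) (lt_irrefl p)
      have hpnn' : ¬ p ∣ n' := fun h => absurd (hpmn p hp (h.mul_left m')) (lt_irrefl p)
      refine ⟨p ^ (j + 2) * m', p * n', by positivity, by positivity, ?_, ?_⟩
      · have hgm : (g (p ^ (j + 2) * m') : ℚ) = (p : ℚ) ^ (2 * j + 3) * (pm : ℚ) * (g m' : ℚ) := by
          rw [g_mul (Nat.Coprime.pow_left _ ((hp.coprime_iff_not_dvd).mpr hpnm')),
            g_prime_pow hp (by omega)]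
          have h1 : 2 * (j + 2) - 1 = 2 * j + 3 := by omega
          have h2 : p - 1 = pm := by omega
          rw [h1, h2]; push_cast; ring
        have hgn : (g (p * n') : ℚ) = (p : ℚ) * (pm : ℚ) * (g n' : ℚ) := by
          have : g p = p * pm := by
            have := g_prime_pow hp (k := 1) (by omega)
            simpa [show 2 * 1 - 1 = 1 by omega, show p - 1 = pm by omega] using this
          rw [g_mul ((hp.coprime_iff_not_dvd).mpr hpnn'), this]; push_cast; ring
        have hgn' : (g n' : ℚ) ≠ 0 := by have := g_pos hn'; positivity
        have hgm' : (g m' : ℚ) ≠ 0 := by have := g_pos hm'; positivity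
        have hb'Q : (b' : ℚ) ≠ 0 := by positivity
        have hcross : (a' : ℚ) * (g n' : ℚ) = (g m' : ℚ) * (b' : ℚ) := by
          have := (div_eq_div_iff hb'Q hgn').mp heq'
          linarith
        rw [div_eq_div_iff (by rw [hQb]; positivity) (by rw [hgn]; positivity)]
        rw [hQa, hQb, hgm, hgn]
        have hvaeq : (p : ℚ) ^ va = (p : ℚ) ^ vb * (p : ℚ) ^ (2 * j + 2) := by
          rw [← pow_add]; congr 1; omega
        rw [hvaeq]
        linear_combination ((p : ℚ) ^ vb * (p : ℚ) ^ (2 * j + 3) * (pm : ℚ)) * hcross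
      · intro r hr hrd
        refine ⟨p, hp, hpab, ?_⟩
        have : p ^ (j + 2) * m' * (p * n') = p ^ (j + 3) * (m' * n') := by ring
        rw [this] at hrd
        rcases (Nat.Prime.dvd_mul hr).mp hrd with h1 | h2
        · have := hr.dvd_of_dvd_pow h1
          exact le_of_eq ((Nat.prime_dvd_prime_iff_eq hr hp).mp this)
        · exact le_of_lt (hpmn r hr h2)
    · -- d = 2*k+1 odd, use g(p^(k+1)) = p^(2k+1)*(p-1)
      obtain ⟨k, hk⟩ := hodd
      have hsmall2 : a' * (b' * pm) < N := by
        have h1 : a' * (b' * pm) < a' * b' * p := by nlinarith [ha'p, hb'p]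
        have h2 : a' * b' * p ≤ a' * b' * (p ^ va * p ^ vb) := by
          have : p ≤ p ^ va * p ^ vb := by
            calc p ≤ p ^ va := Nat.le_self_pow (by omega) p
            _ ≤ p ^ va * p ^ vb := Nat.le_mul_of_pos_right _ (by positivity)
          exact Nat.mul_le_mul_left _ this
        have h3 : a' * b' * (p ^ va * p ^ vb) = a * b := by rw [← hA, ← hB]; ring
        omega
      obtain ⟨m', n', hm', hn', heq', hpr'⟩ := IH a' (b' * pm) ha'p (by positivity) hsmall2
      have hpmn : ∀ r : ℕ, r.Prime → r ∣ m' * n' → r < p := by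
        intro r hr hrd
        obtain ⟨s, hs, hsd, hrs⟩ := hpr' r hr hrd
        have : s < p := hlt s hs hsd
        omega
      have hpnm' : ¬ p ∣ m' := fun h => absurd (hpmn p hp (h.mul_right n')) (lt_irrefl p)
      refine ⟨p ^ (k + 1) * m', n', by positivity, hn', ?_, ?_⟩
      · have hgm : (g (p ^ (k + 1) * m') : ℚ) = (p : ℚ) ^ (2 * k + 1) * (pm : ℚ) * (g m' : ℚ) := by
          rw [g_mul (Nat.Coprime.pow_left _ ((hp.coprime_iff_not_dvd).mpr hpnm')),
            g_prime_pow hp (by omega)]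
          have h1 : 2 * (k + 1) - 1 = 2 * k + 1 := by omega
          have h2 : p - 1 = pm := by omega
          rw [h1, h2]; push_cast; ring
        have hgn' : (g n' : ℚ) ≠ 0 := by have := g_pos hn'; positivity
        have hb'Q : ((b' * pm : ℕ) : ℚ) ≠ 0 := by positivity
        have hcross : (a' : ℚ) * (g n' : ℚ) = (g m' : ℚ) * ((b' : ℚ) * (pm : ℚ)) := by
          have := (div_eq_div_iff hb'Q hgn').mp heq'
          push_cast at this
          linarith
        rw [div_eq_div_iff (by rw [hQb]; positivity) (by have := g_pos hn'; positivity)]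
        rw [hQa, hQb, hgm]
        have hvaeq : (p : ℚ) ^ va = (p : ℚ) ^ vb * (p : ℚ) ^ (2 * k + 1) := by
          rw [← pow_add]; congr 1; omega
        rw [hvaeq]
        linear_combination ((p : ℚ) ^ vb * (p : ℚ) ^ (2 * k + 1)) * hcross
      · intro r hr hrd
        refine ⟨p, hp, hpab, ?_⟩
        have : p ^ (k + 1) * m' * n' = p ^ (k + 1) * (m' * n') := by ring
        rw [this] at hrd
        rcases (Nat.Prime.dvd_mul hr).mp hrd with h1 | h2
        · have := hr.dvd_of_dvd_pow h1
          exact le_of_eq ((Nat.prime_dvd_prime_iff_eq hr hp).mp this)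
        · exact le_of_lt (hpmn r hr h2)

private lemma key : ∀ N a b : ℕ, 0 < a → 0 < b → a * b ≤ N → Good a b := by
  intro N
  induction N using Nat.strong_induction_on with
  | _ N IH =>
    intro a b ha hb hab
    by_cases h1 : a * b = 1
    · have ha1 : a = 1 := Nat.eq_one_of_mul_eq_one_right h1
      have hb1 : b = 1 := Nat.eq_one_of_mul_eq_one_left h1
      refine ⟨1, 1, one_pos, one_pos, by norm_num [ha1, hb1, g], ?_⟩
      intro r hr hrd
      simp at hrd
      exact absurd hrd hr.ne_one
    · rcases lt_or_eq_of_le hab with hlt | heq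
      · exact IH (a * b) hlt a b ha hb le_rfl
      · have hone : 1 < a * b := by
          have h2 := Nat.mul_pos ha hb
          omega
        have hne : (a * b).primeFactors.Nonempty := Nat.nonempty_primeFactors.mpr hone
        set p := (a * b).primeFactors.max' hne with hpdef
        have hpmem := (a * b).primeFactors.max'_mem hne
        obtain ⟨hp, hpd, _⟩ := Nat.mem_primeFactors.mp hpmem
        have hmax : ∀ r ∈ (a * b).primeFactors, r ≤ p := fun r hr => Finset.le_max' _ r hr
        have hv1 : 0 < a.factorization p + b.factorization p := by
          have h2 := hp.factorization_pos_of_dvd (by positivity : a * b ≠ 0) hpd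
          rwa [Nat.factorization_mul ha.ne' hb.ne', Finsupp.add_apply] at h2
        have IH' : ∀ x y : ℕ, 0 < x → 0 < y → x * y < N → Good x y := by
          intro x y hx hy hxy
          exact IH (x * y) hxy x y hx hy le_rfl
        rcases le_total (b.factorization p) (a.factorization p) with hle | hle
        · exact step N IH' a b ha hb heq p hp hmax hle hv1
        · refine good_symm hb ha ?_
          refine step N IH' b a hb ha (by rw [mul_comm]; exact heq) p hp ?_ hle (by omega)
          rwa [mul_comm]

theorem stmt2 (q : ℚ) (hq : 0 < q) :
    ∃ m n : ℕ, 0 < m ∧ 0 < n ∧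
      q = (Nat.totient (m ^ 2) : ℚ) / (Nat.totient (n ^ 2) : ℚ) := by
  have hnum : 0 < q.num := Rat.num_pos.mpr hq
  have hna : 0 < q.num.toNat := by omega
  have hden : 0 < q.den := q.pos
  obtain ⟨m, n, hm, hn, heq, -⟩ :=
    key (q.num.toNat * q.den) q.num.toNat q.den hna hden le_rfl
  have hcast : ((q.num.toNat : ℕ) : ℚ) = (q.num : ℚ) := by
    exact_mod_cast Int.toNat_of_nonneg hnum.le
  have hqe : (q.num.toNat : ℚ) / (q.den : ℚ) = q := by
    rw [hcast, Rat.num_div_den]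
  exact ⟨m, n, hm, hn, by rw [← hqe, heq]; rfl⟩
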